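/- arXiv:1312.6510 — 7 statements merged into one kernel-verified Lean document; each statement's English description precedes it below -/
import Mathlib

section
/- For all real z⁻, z⁺ with 0 ≤ z⁻ ≤ z⁺ ≤ π, it holds that cos((z⁺ − z⁻)/2) ≥ 1 − (cos z⁻ − cos z⁺)/2. -/
theorem stmt_3 (zm zp : ℝ) (h0 : 0 ≤ zm) (h1 : zm ≤ zp) (h2 : zp ≤ Real.pi) :
    1 - (Real.cos zm - Real.cos zp) / 2 ≤ Real.cos ((zp - zm) / 2) := by
  have hm : Real.cos zm = 2 * Real.cos (zm / 2) ^ 2 - 1 := by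
    rw [show zm = 2 * (zm/2) by ring, Real.cos_two_mul]; ring_nf
  have hp : Real.cos zp = 2 * Real.cos (zp / 2) ^ 2 - 1 := by
    rw [show zp = 2 * (zp/2) by ring, Real.cos_two_mul]; ring_nf
  have hsub : Real.cos ((zp - zm) / 2) =
      Real.cos (zp / 2) * Real.cos (zm / 2) + Real.sin (zp / 2) * Real.sin (zm / 2) := by
    rw [show (zp - zm) / 2 = zp / 2 - zm / 2 by ring, Real.cos_sub]
  have pi_pos := Real.pi_pos
  have hca : 0 ≤ Real.cos (zp / 2) := Real.cos_nonneg_of_mem_Icc ⟨by linarith, by linarith⟩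
  have hsb : 0 ≤ Real.sin (zm / 2) := Real.sin_nonneg_of_nonneg_of_le_pi (by linarith) (by linarith)
  have hcab : Real.cos (zp / 2) ≤ Real.cos (zm / 2) :=
    Real.cos_le_cos_of_nonneg_of_le_pi (by linarith) (by linarith) (by linarith)
  have hsab : Real.sin (zm / 2) ≤ Real.sin (zp / 2) :=
    Real.sin_le_sin_of_le_of_le_pi_div_two (by linarith) (by linarith) (by linarith)
  have hs : Real.sin (zp / 2) ^ 2 = 1 - Real.cos (zp / 2) ^ 2 := by
    have := Real.sin_sq_add_cos_sq (zp / 2); linarith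
  nlinarith [mul_nonneg hca (sub_nonneg.2 hcab), mul_nonneg hsb (sub_nonneg.2 hsab),
    Real.sin_sq_add_cos_sq (zm / 2)]
end

section
/- Let 0 ≤ z⁻ ≤ z⁺ ≤ π and let z* ∈ [0, π/2] satisfy cos z* = 1 − (cos z⁻ − cos z⁺)/2. Then z⁺ − z⁻ ≤ 2·z*. -/
theorem stmt_4 (zm zp zs : ℝ) (h0 : 0 ≤ zm) (h1 : zm ≤ zp) (h2 : zp ≤ Real.pi)
    (hzs : zs ∈ Set.Icc 0 (Real.pi / 2))
    (hcos : Real.cos zs = 1 - (Real.cos zm - Real.cos zp) / 2) :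
    zp - zm ≤ 2 * zs := by
  obtain ⟨hzs0, hzs2⟩ := hzs
  have hpi := Real.pi_pos
  set d : ℝ := (zp - zm) / 2 with hd
  set a : ℝ := (zp + zm) / 2 with ha
  have hd0 : 0 ≤ d := by simp only [hd]; linarith
  have hda : d ≤ a := by simp only [hd, ha]; linarith
  have hapi : a ≤ Real.pi - d := by simp only [hd, ha]; linarith
  have hd2 : d ≤ Real.pi / 2 := by simp only [hd]; linarith
  -- identity
  have hid : Real.cos zm - Real.cos zp = 2 * Real.sin a * Real.sin d := by
    rw [Real.cos_sub_cos]
    have : (zm - zp) / 2 = -d := by simp only [hd]; ring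
    rw [this, Real.sin_neg]
    have : (zm + zp) / 2 = a := by simp only [ha]; ring
    rw [this]; ring
  -- sin a ≥ sin d
  have hsin : Real.sin d ≤ Real.sin a := by
    rcases le_or_gt a (Real.pi / 2) with h | h
    · exact Real.sin_le_sin_of_le_of_le_pi_div_two (by linarith) h hda
    · have : Real.sin a = Real.sin (Real.pi - a) := (Real.sin_pi_sub a).symm
      rw [this]
      exact Real.sin_le_sin_of_le_of_le_pi_div_two (by linarith) (by linarith) (by linarith)
  have hsind0 : 0 ≤ Real.sin d := Real.sin_nonneg_of_nonneg_of_le_pi hd0 (by linarith)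
  have hcosd0 : 0 ≤ Real.cos d := Real.cos_nonneg_of_mem_Icc ⟨by linarith, hd2⟩
  have hcosd1 : Real.cos d ≤ 1 := Real.cos_le_one d
  -- cos zs ≤ cos d
  have key : Real.cos zs ≤ Real.cos d := by
    have h1' : Real.cos zs ≤ 1 - Real.sin d * Real.sin d := by
      rw [hcos, hid]; nlinarith
    have h2' : 1 - Real.sin d * Real.sin d = Real.cos d * Real.cos d := by
      have := Real.sin_sq_add_cos_sq d; nlinarith
    nlinarith
  -- conclude d ≤ zs
  have : d ≤ zs := by
    by_contra hlt
    push_neg at hlt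
    have := Real.strictAntiOn_cos ⟨hzs0, by linarith⟩ ⟨hd0, by linarith⟩ hlt
    linarith
  simp only [hd] at this; linarith
end

section
/- Let φ(z) = −cos z on [0, π]. For any measurable set S ⊆ [−1, 1], the Lebesgue measure of its preimage satisfies |φ⁻¹(S)| ≤ |φ⁻¹(S*)|, where S* = [−1, −λ*] ∪ [λ*, 1] with λ* = 1 − |S|/2. -/
open Real MeasureTheory Set

lemma lip_vol {K : NNReal} {f : ℝ → ℝ} {s : Set ℝ} (h : LipschitzOnWith K f s) :
    volume (f '' s) ≤ K * volume s := by
  have := h.hausdorffMeasure_image_le zero_le_one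
  simpa [MeasureTheory.hausdorffMeasure_real] using this

lemma phi_deriv (z : ℝ) : HasDerivAt (fun z => -Real.cos z) (Real.sin z) z := by
  have h := (Real.hasDerivAt_cos z).neg
  rw [neg_neg] at h
  exact h

lemma phi_lip1 (a : ℝ) (h0 : 0 ≤ a) (ha : a ≤ π/2) :
    LipschitzOnWith (Real.toNNReal (Real.sin a)) (fun z => -Real.cos z) (Icc 0 a) := by
  apply (convex_Icc 0 a).lipschitzOnWith_of_nnnorm_hasDerivWithin_le
    (f' := fun z => Real.sin z)
  · intro z _
    exact (phi_deriv z).hasDerivWithinAt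
  · intro z hz
    rw [← NNReal.coe_le_coe]
    have h1 : 0 ≤ Real.sin z := Real.sin_nonneg_of_nonneg_of_le_pi hz.1
      (hz.2.trans (ha.trans (by linarith [Real.pi_pos])))
    have h2 : Real.sin z ≤ Real.sin a := by
      apply Real.strictMonoOn_sin.monotoneOn ⟨by linarith [Real.pi_pos, hz.1], hz.2.trans ha⟩
        ⟨by linarith [Real.pi_pos], ha⟩ hz.2
    simpa [Real.coe_toNNReal _ (h1.trans h2), Real.norm_eq_abs, abs_of_nonneg h1] using h2

lemma phi_lip2 (a : ℝ) (h0 : 0 ≤ a) (ha : a ≤ π/2) :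
    LipschitzOnWith (Real.toNNReal (Real.sin a)) (fun z => -Real.cos z) (Icc (π - a) π) := by
  apply (convex_Icc (π - a) π).lipschitzOnWith_of_nnnorm_hasDerivWithin_le
    (f' := fun z => Real.sin z)
  · intro z _
    exact (phi_deriv z).hasDerivWithinAt
  · intro z hz
    rw [← NNReal.coe_le_coe]
    have h1 : 0 ≤ Real.sin z := Real.sin_nonneg_of_nonneg_of_le_pi
      (by linarith [hz.1, Real.pi_pos] : (0:ℝ) ≤ z) hz.2
    have h2 : Real.sin z ≤ Real.sin a := by
      rw [← Real.sin_pi_sub z]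
      apply Real.strictMonoOn_sin.monotoneOn
        ⟨by linarith [hz.2, Real.pi_pos], by linarith [hz.1]⟩
        ⟨by linarith [Real.pi_pos], ha⟩ (by linarith [hz.1])
    simpa [Real.coe_toNNReal _ (h1.trans h2), Real.norm_eq_abs, abs_of_nonneg h1] using h2

lemma g_lip (a : ℝ) (h0 : 0 < a) (ha : a ≤ π/2) :
    LipschitzOnWith (Real.toNNReal (Real.sin a))⁻¹ (fun y => π/2 + Real.arcsin y)
      (Icc (-Real.cos a) (Real.cos a)) := by
  have hsin : 0 < Real.sin a := Real.sin_pos_of_pos_of_lt_pi h0 (by linarith [Real.pi_pos])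
  have hcos1 : Real.cos a < 1 := by
    calc Real.cos a < Real.cos 0 := by
          apply Real.strictAntiOn_cos ⟨le_rfl, Real.pi_pos.le⟩
            ⟨h0.le, by linarith [Real.pi_pos]⟩ h0
      _ = 1 := Real.cos_zero
  apply (convex_Icc _ _).lipschitzOnWith_of_nnnorm_hasDerivWithin_le
    (f' := fun y => 1 / Real.sqrt (1 - y ^ 2))
  · intro y hy
    have hy1 : y ≠ -1 := by intro h; rw [h] at hy; linarith [hy.1]
    have hy2 : y ≠ 1 := by intro h; rw [h] at hy; linarith [hy.2]
    exact ((Real.hasDerivAt_arcsin hy1 hy2).const_add (π/2)).hasDerivWithinAt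
  · intro y hy
    rw [← NNReal.coe_le_coe]
    have hsq : y ^ 2 ≤ Real.cos a ^ 2 := sq_le_sq' hy.1 hy.2
    have hsa : Real.sin a = Real.sqrt (1 - Real.cos a ^ 2) :=
      Real.sin_eq_sqrt_one_sub_cos_sq h0.le (by linarith [Real.pi_pos])
    have hge : Real.sin a ≤ Real.sqrt (1 - y ^ 2) := by
      rw [hsa]; exact Real.sqrt_le_sqrt (by linarith)
    have : 1 / Real.sqrt (1 - y ^ 2) ≤ 1 / Real.sin a :=
      one_div_le_one_div_of_le hsin hge
    rw [NNReal.coe_inv, Real.coe_toNNReal _ hsin.le]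
    simpa [Real.norm_eq_abs, abs_inv, abs_of_nonneg (Real.sqrt_nonneg _), one_div] using this

theorem stmt_9 (S : Set ℝ) (hS : MeasurableSet S) (hsub : S ⊆ Icc (-1) 1) :
    volume (Icc 0 π ∩ (fun z => -Real.cos z) ⁻¹' S) ≤
      volume (Icc 0 π ∩ (fun z => -Real.cos z) ⁻¹'
        (Icc (-1) (-(1 - (volume S).toReal / 2)) ∪ Icc (1 - (volume S).toReal / 2) 1)) := by
  have hφm : Measurable (fun z => -Real.cos z) := Real.continuous_cos.neg.measurable
  set t := (volume S).toReal with ht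
  set l : ℝ := 1 - t / 2 with hl
  have hS2 : volume S ≤ ENNReal.ofReal 2 := by
    calc volume S ≤ volume (Icc (-1:ℝ) 1) := measure_mono hsub
      _ = ENNReal.ofReal 2 := by rw [Real.volume_Icc]; norm_num
  have hSfin : volume S ≠ ⊤ := ne_top_of_le_ne_top ENNReal.ofReal_ne_top hS2
  have ht0 : 0 ≤ t := ENNReal.toReal_nonneg
  have ht2 : t ≤ 2 := by
    have := ENNReal.toReal_mono ENNReal.ofReal_ne_top hS2
    simpa using this
  have hl0 : 0 ≤ l := by rw [hl]; linarith
  have hl1 : l ≤ 1 := by rw [hl]; linarith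
  set A := Icc 0 π ∩ (fun z => -Real.cos z) ⁻¹' S with hAdef
  have hAm : MeasurableSet A := measurableSet_Icc.inter (hφm hS)
  rcases hl0.eq_or_lt with h0 | hlpos
  · -- l = 0 : the right set contains everything
    apply measure_mono
    rintro z ⟨hz1, hz2⟩
    refine ⟨hz1, ?_⟩
    have hy := hsub hz2
    by_cases hc : -Real.cos z ≤ -l
    · exact Or.inl ⟨hy.1, hc⟩
    · push_neg at hc
      refine Or.inr ⟨?_, hy.2⟩
      show l ≤ -Real.cos z
      linarith
  set c := Real.arccos l with hc
  have hc0 : 0 ≤ c := Real.arccos_nonneg l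
  have hcπ2 : c < π/2 := Real.arccos_lt_pi_div_two.2 hlpos
  have hcos : Real.cos c = l := Real.cos_arccos (by linarith) hl1
  have hπ := Real.pi_pos
  -- key bound
  have key : ∀ a : ℝ, c < a → a < π/2 → volume A ≤ ENNReal.ofReal (2 * a) := by
    intro a hca ha2
    have ha0 : 0 < a := lt_of_le_of_lt hc0 hca
    have haπ : a < π := by linarith
    have hsin : 0 < Real.sin a := Real.sin_pos_of_pos_of_lt_pi ha0 haπ
    set sa := Real.toNNReal (Real.sin a) with hsa
    have hsane : sa ≠ 0 := by
      simp only [hsa, ne_eq, Real.toNNReal_eq_zero, not_le]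
      exact hsin
    have hcosa : Real.cos a < l := by
      rw [← hcos]
      exact Real.strictAntiOn_cos ⟨hc0, by linarith⟩ ⟨ha0.le, haπ.le⟩ hca
    have hcosa0 : 0 < Real.cos a := Real.cos_pos_of_mem_Ioo ⟨by linarith, ha2⟩
    -- cover
    have hsub1 : A ⊆ (A ∩ Icc 0 a) ∪ ((A ∩ Icc a (π - a)) ∪ (A ∩ Icc (π - a) π)) := by
      intro z hz
      rcases le_total z a with h | h
      · exact Or.inl ⟨hz, hz.1.1, h⟩
      rcases le_total z (π - a) with h' | h'
      · exact Or.inr (Or.inl ⟨hz, h, h'⟩)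
      · exact Or.inr (Or.inr ⟨hz, h', hz.1.2⟩)
    have hb : volume A ≤ volume (A ∩ Icc 0 a) +
        (volume (A ∩ Icc a (π - a)) + volume (A ∩ Icc (π - a) π)) :=
      le_trans (measure_mono hsub1) (le_trans (measure_union_le _ _)
        (add_le_add le_rfl (measure_union_le _ _)))
    -- middle part sits inside the Lipschitz image of S ∩ [-cos a, cos a]
    have hmid : A ∩ Icc a (π - a) ⊆
        (fun y => π/2 + Real.arcsin y) '' (S ∩ Icc (-Real.cos a) (Real.cos a)) := by
      rintro z ⟨⟨⟨hz0, hzπ⟩, hzS⟩, hza, hzb⟩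
      refine ⟨-Real.cos z, ⟨hzS, ?_, ?_⟩, ?_⟩
      · have : Real.cos z ≤ Real.cos a :=
          Real.cos_le_cos_of_nonneg_of_le_pi ha0.le hzπ hza
        linarith
      · have : Real.cos (π - a) ≤ Real.cos z :=
          Real.cos_le_cos_of_nonneg_of_le_pi hz0 (by linarith) hzb
        rw [Real.cos_pi_sub] at this
        linarith
      · show π/2 + Real.arcsin (-Real.cos z) = z
        rw [Real.arcsin_neg, ← sub_eq_add_neg, ← Real.arccos_eq_pi_div_two_sub_arcsin,
          Real.arccos_cos hz0 hzπ]
    have hmid2 : volume (A ∩ Icc a (π - a)) ≤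
        (sa⁻¹ : NNReal) * volume (S ∩ Icc (-Real.cos a) (Real.cos a)) :=
      le_trans (measure_mono hmid) (lip_vol ((g_lip a ha0 ha2.le).mono inter_subset_right))
    -- the middle of S avoids the two end intervals
    set T : Set ℝ := Icc (-1) (-l) ∪ Icc l 1 with hT
    have hTm : MeasurableSet T := measurableSet_Icc.union measurableSet_Icc
    have hmid3 : S ∩ Icc (-Real.cos a) (Real.cos a) ⊆ S \ T := by
      rintro y ⟨hyS, hy1, hy2⟩
      refine ⟨hyS, ?_⟩
      rintro (⟨_, h⟩ | ⟨h, _⟩) <;> linarith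
    -- |S \ T| = |T \ S|
    have hTvol : volume T = ENNReal.ofReal t := by
      have hTd : Disjoint (Icc (-1:ℝ) (-l)) (Icc l 1) := by
        rw [Set.disjoint_left]
        rintro x ⟨_, h1⟩ ⟨h2, _⟩
        linarith
      rw [hT, measure_union hTd measurableSet_Icc, Real.volume_Icc, Real.volume_Icc,
        ← ENNReal.ofReal_add (by linarith) (by linarith)]
      congr 1
      rw [hl]; ring
    have hSvol : volume S = ENNReal.ofReal t := (ENNReal.ofReal_toReal hSfin).symm
    have hdiffeq : volume (S \ T) = volume (T \ S) := by
      have h1 : volume (S \ T) + volume (S ∩ T) = volume S := measure_diff_add_inter S hTm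
      have h2 : volume (T \ S) + volume (T ∩ S) = volume T := measure_diff_add_inter T hS
      rw [inter_comm] at h2
      have hfin2 : volume (S ∩ T) ≠ ⊤ :=
        ne_top_of_le_ne_top hSfin (measure_mono inter_subset_left)
      apply (ENNReal.add_left_inj hfin2).mp
      rw [h1, h2, hSvol, hTvol]
    -- T \ S is covered by images of the end pieces not in A
    have himg : T \ S ⊆ ((fun z => -Real.cos z) '' (Icc 0 a \ A)) ∪
        ((fun z => -Real.cos z) '' (Icc (π - a) π \ A)) := by
      rintro y ⟨hyT, hyS⟩
      rcases hyT with ⟨hy1, hy2⟩ | ⟨hy1, hy2⟩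
      · -- y ∈ [-1, -l]
        have hny1 : (-1:ℝ) ≤ -y := by linarith
        have hny2 : -y ≤ 1 := by linarith
        have hcosz : Real.cos (Real.arccos (-y)) = -y := Real.cos_arccos hny1 hny2
        have hza : Real.arccos (-y) ≤ a := by
          have : Real.arccos (-y) ≤ Real.arccos l := by
            apply Real.strictAntiOn_arccos.antitoneOn ⟨by linarith, hl1⟩
              ⟨hny1, hny2⟩ (by linarith)
          linarith [hc ▸ this, hca]
        refine Or.inl ⟨Real.arccos (-y), ⟨⟨Real.arccos_nonneg _, hza⟩, ?_⟩, ?_⟩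
        · intro hzA
          apply hyS
          have h := hzA.2
          simp only [mem_preimage, hcosz] at h
          simpa using h
        · show -Real.cos (Real.arccos (-y)) = y
          rw [hcosz]; ring
      · -- y ∈ [l, 1]
        have hny1 : (-1:ℝ) ≤ -y := by linarith
        have hny2 : -y ≤ 1 := by linarith
        have hcosz : Real.cos (Real.arccos (-y)) = -y := Real.cos_arccos hny1 hny2
        have hza : π - a ≤ Real.arccos (-y) := by
          have h1 : Real.arccos (-l) ≤ Real.arccos (-y) := by
            apply Real.strictAntiOn_arccos.antitoneOn ⟨hny1, hny2⟩
              ⟨by linarith, by linarith⟩ (by linarith)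
          rw [Real.arccos_neg, ← hc] at h1
          linarith
        refine Or.inr ⟨Real.arccos (-y), ⟨⟨hza, Real.arccos_le_pi _⟩, ?_⟩, ?_⟩
        · intro hzA
          apply hyS
          have h := hzA.2
          simp only [mem_preimage, hcosz] at h
          simpa using h
        · show -Real.cos (Real.arccos (-y)) = y
          rw [hcosz]; ring
    -- measure chain
    have h5 : volume (T \ S) ≤ sa * volume (Icc 0 a \ A) + sa * volume (Icc (π - a) π \ A) :=
      le_trans (measure_mono himg) (le_trans (measure_union_le _ _)
        (add_le_add (lip_vol ((phi_lip1 a ha0.le ha2.le).mono diff_subset))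
          (lip_vol ((phi_lip2 a ha0.le ha2.le).mono diff_subset))))
    have h6 : volume (A ∩ Icc a (π - a)) ≤
        volume (Icc 0 a \ A) + volume (Icc (π - a) π \ A) := by
      calc volume (A ∩ Icc a (π - a))
          ≤ (sa⁻¹ : NNReal) * volume (S ∩ Icc (-Real.cos a) (Real.cos a)) := hmid2
        _ ≤ (sa⁻¹ : NNReal) * volume (S \ T) := mul_le_mul_right (measure_mono hmid3) _
        _ = (sa⁻¹ : NNReal) * volume (T \ S) := by rw [hdiffeq]
        _ ≤ (sa⁻¹ : NNReal) * (sa * volume (Icc 0 a \ A) + sa * volume (Icc (π - a) π \ A)) :=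
            mul_le_mul_right h5 _
        _ = ((sa⁻¹ * sa : NNReal) : ENNReal) *
              (volume (Icc 0 a \ A) + volume (Icc (π - a) π \ A)) := by
            rw [← mul_add, ← mul_assoc, ← ENNReal.coe_mul]
        _ = volume (Icc 0 a \ A) + volume (Icc (π - a) π \ A) := by
            rw [inv_mul_cancel₀ hsane]
            simp
    calc volume A ≤ volume (A ∩ Icc 0 a) +
          (volume (A ∩ Icc a (π - a)) + volume (A ∩ Icc (π - a) π)) := hb
      _ ≤ volume (A ∩ Icc 0 a) +
          ((volume (Icc 0 a \ A) + volume (Icc (π - a) π \ A)) + volume (A ∩ Icc (π - a) π)) := by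
            gcongr
      _ = (volume (Icc 0 a ∩ A) + volume (Icc 0 a \ A)) +
          (volume (Icc (π - a) π ∩ A) + volume (Icc (π - a) π \ A)) := by
            rw [inter_comm (Icc 0 a) A, inter_comm (Icc (π - a) π) A]
            ring
      _ = volume (Icc 0 a) + volume (Icc (π - a) π) := by
            rw [measure_inter_add_diff _ hAm, measure_inter_add_diff _ hAm]
      _ = ENNReal.ofReal (2 * a) := by
            rw [Real.volume_Icc, Real.volume_Icc,
              ← ENNReal.ofReal_add (by linarith) (by linarith)]
            congr 1
            ring
  -- take a → c
  have hA2c : volume A ≤ ENNReal.ofReal (2 * c) := by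
    apply ENNReal.le_of_forall_pos_le_add
    intro ε hε _
    have hεR : (0:ℝ) < ε := hε
    set a := min (c + (ε:ℝ)/2) ((c + π/2)/2) with ha
    have h1 : c < a := lt_min (by linarith) (by linarith)
    have h2 : a < π/2 := lt_of_le_of_lt (min_le_right _ _) (by linarith)
    calc volume A ≤ ENNReal.ofReal (2 * a) := key a h1 h2
      _ ≤ ENNReal.ofReal (2 * c + ε) := by
          apply ENNReal.ofReal_le_ofReal
          have := min_le_left (c + (ε:ℝ)/2) ((c + π/2)/2)
          rw [ha]
          linarith
      _ = ENNReal.ofReal (2 * c) + ENNReal.ofReal ε := ENNReal.ofReal_add (by linarith) hεR.le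
      _ = ENNReal.ofReal (2 * c) + ε := by rw [ENNReal.ofReal_coe_nnreal]
  -- compute the right-hand side set
  have hset : Icc 0 π ∩ (fun z => -Real.cos z) ⁻¹' (Icc (-1) (-l) ∪ Icc l 1) =
      Icc 0 c ∪ Icc (π - c) π := by
    ext z
    simp only [mem_inter_iff, mem_preimage, mem_union, mem_Icc]
    constructor
    · rintro ⟨⟨hz0, hzπ⟩, h | h⟩
      · left
        refine ⟨hz0, ?_⟩
        by_contra hcz
        push_neg at hcz
        have := Real.strictAntiOn_cos ⟨hc0, by linarith⟩ ⟨hz0, hzπ⟩ hcz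
        rw [hcos] at this
        linarith [h.2]
      · right
        refine ⟨?_, hzπ⟩
        by_contra hcz
        push_neg at hcz
        have := Real.strictAntiOn_cos ⟨hz0, hzπ⟩ ⟨by linarith, by linarith⟩ hcz
        rw [Real.cos_pi_sub, hcos] at this
        linarith [h.1]
    · rintro (⟨hz0, hzc⟩ | ⟨hzc, hzπ⟩)
      · have hzπ : z ≤ π := by linarith
        have h1 : l ≤ Real.cos z := by
          rw [← hcos]
          exact Real.cos_le_cos_of_nonneg_of_le_pi hz0 (by linarith) hzc
        exact ⟨⟨hz0, hzπ⟩, Or.inl ⟨by linarith [Real.cos_le_one z], by linarith⟩⟩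
      · have hz0 : 0 ≤ z := by linarith
        have h1 : Real.cos z ≤ -l := by
          have := Real.cos_le_cos_of_nonneg_of_le_pi (by linarith : (0:ℝ) ≤ π - c) hzπ hzc
          rw [Real.cos_pi_sub, hcos] at this
          linarith
        exact ⟨⟨hz0, hzπ⟩, Or.inr ⟨by linarith, by linarith [Real.neg_one_le_cos z]⟩⟩
  rw [hset, measure_union ?hd measurableSet_Icc]
  · rw [Real.volume_Icc, Real.volume_Icc,
      ← ENNReal.ofReal_add (by linarith) (by linarith)]
    calc volume A ≤ ENNReal.ofReal (2 * c) := hA2c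
      _ = ENNReal.ofReal (c - 0 + (π - (π - c))) := by congr 1; ring
  case hd =>
    rw [Set.disjoint_left]
    rintro x ⟨_, hx1⟩ ⟨hx2, _⟩
    linarith
end

section
/- Let φ(z) = −cos z on [0, π]. For any measurable set S ⊆ [−1, 1], the Lebesgue measure of the preimage satisfies |φ⁻¹(S)| ≤ (π/√2)·|S|^{1/2}. -/
open Real MeasureTheory Set

/-- Sharp linear lower bound for `sin` on `[0, π/4]`, from concavity. -/
lemma sin_lower_aux {u : ℝ} (h0 : 0 ≤ u) (h1 : u ≤ π / 4) :
    Real.sqrt 2 * (2 / π) * u ≤ Real.sin u := by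
  have hπ := Real.pi_pos
  set a : ℝ := 4 * u / π with ha
  have ha0 : 0 ≤ a := by positivity
  have ha1 : a ≤ 1 := by rw [ha, div_le_one hπ]; linarith
  have hmem0 : (0:ℝ) ∈ Icc 0 π := ⟨le_rfl, hπ.le⟩
  have hmem4 : π / 4 ∈ Icc 0 π := ⟨by positivity, by linarith⟩
  have h := strictConcaveOn_sin_Icc.concaveOn.2 hmem0 hmem4
    (sub_nonneg.2 ha1) ha0 (by ring : (1 - a) + a = 1)
  simp only [smul_eq_mul, mul_zero, Real.sin_zero, zero_add] at h
  rw [Real.sin_pi_div_four] at h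
  have harg : a * (π / 4) = u := by rw [ha]; field_simp
  rw [harg] at h
  have : Real.sqrt 2 * (2 / π) * u = a * (Real.sqrt 2 / 2) := by
    rw [ha]; field_simp; ring
  linarith

theorem stmt_10 (S : Set ℝ) (hS : MeasurableSet S) (hsub : S ⊆ Icc (-1) 1) :
    volume (Icc 0 π ∩ (fun z => -Real.cos z) ⁻¹' S) ≤
      ENNReal.ofReal (π / Real.sqrt 2 * Real.sqrt (volume S).toReal) := by
  have hπ := Real.pi_pos
  set φ : ℝ → ℝ := fun z => -Real.cos z with hφ
  set E : Set ℝ := Icc 0 π ∩ φ ⁻¹' S with hEdef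
  have hEsub : E ⊆ Icc 0 π := inter_subset_left
  have hEmeas : MeasurableSet E :=
    measurableSet_Icc.inter (hS.preimage (by fun_prop))
  have hEfin : volume E ≤ ENNReal.ofReal π := by
    have h : volume E ≤ volume (Icc 0 π) := measure_mono hEsub
    simpa [Real.volume_Icc] using h
  have hEne : volume E ≠ ⊤ :=
    (lt_of_le_of_lt hEfin ENNReal.ofReal_lt_top).ne
  set m : ℝ := (volume E).toReal with hm
  have hm0 : 0 ≤ m := ENNReal.toReal_nonneg
  have hmπ : m ≤ π := by
    have := ENNReal.toReal_mono (by simp) hEfin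
    simpa [ENNReal.toReal_ofReal hπ.le] using this
  have hEvol : volume E = ENNReal.ofReal m := (ENNReal.ofReal_toReal hEne).symm
  have hSfin : volume S ≠ ⊤ := by
    have h : volume S ≤ volume (Icc (-1:ℝ) 1) := measure_mono hsub
    exact (lt_of_le_of_lt (h.trans_eq (Real.volume_Icc))
      ENNReal.ofReal_lt_top).ne
  -- the function as a lintegrand
  set f : ℝ → ENNReal := fun z => ENNReal.ofReal (Real.sin z) with hf
  have hfmeas : Measurable f := by fun_prop
  -- Step A : ∫⁻ over E of sin ≤ volume S  (change of variables)
  have hA : ∫⁻ z in E, f z ≤ volume S := by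
    have hder : ∀ z ∈ E, HasFDerivWithinAt φ
        ((1 : ℝ →L[ℝ] ℝ).smulRight (Real.sin z)) E z := by
      intro z hz
      have h1 : HasDerivAt φ (Real.sin z) z := by
        have h := (Real.hasDerivAt_cos z).neg; simp only [neg_neg] at h; exact h
      exact h1.hasDerivWithinAt.hasFDerivWithinAt
    have hinj : InjOn φ E := by
      intro a ha b hb hab
      exact Real.injOn_cos (hEsub ha) (hEsub hb) (neg_injective hab)
    have himg := lintegral_abs_det_fderiv_eq_addHaar_image volume hEmeas hder hinj
    have hcong : ∫⁻ z in E, f z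
        = ∫⁻ z in E, ENNReal.ofReal |((1 : ℝ →L[ℝ] ℝ).smulRight (Real.sin z)).det| := by
      apply setLIntegral_congr_fun hEmeas
      intro z hz
      beta_reduce
      have hz' := hEsub hz
      rw [ContinuousLinearMap.smulRight_one_eq_toSpanSingleton, ContinuousLinearMap.det_toSpanSingleton,
        abs_of_nonneg (Real.sin_nonneg_of_nonneg_of_le_pi hz'.1 hz'.2)]
    calc ∫⁻ z in E, f z = volume (φ '' E) := by rw [hcong, himg]
      _ ≤ volume S := measure_mono (image_subset_iff.2 inter_subset_right)
  -- the rearranged set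
  set t : ℝ := m / 2 with ht
  have ht0 : 0 ≤ t := by positivity
  have htπ : t ≤ π / 2 := by rw [ht]; linarith
  set E₀ : Set ℝ := Icc 0 t ∪ Ioc (π - t) π with hE₀def
  have hdisj : Disjoint (Icc 0 t) (Ioc (π - t) π) := by
    rw [Set.disjoint_left]
    rintro x ⟨hx1, hx2⟩ ⟨hx3, hx4⟩
    linarith
  have hE₀meas : MeasurableSet E₀ := measurableSet_Icc.union measurableSet_Ioc
  have hE₀vol : volume E₀ = ENNReal.ofReal m := by
    rw [hE₀def, measure_union hdisj measurableSet_Ioc, Real.volume_Icc,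
      Real.volume_Ioc, ← ENNReal.ofReal_add (by linarith) (by linarith)]
    congr 1
    rw [ht]; ring
  -- pointwise bounds on sin
  have hup : ∀ z ∈ E₀, Real.sin z ≤ Real.sin t := by
    rintro z (⟨hz1, hz2⟩ | ⟨hz1, hz2⟩)
    · exact Real.strictMonoOn_sin.monotoneOn ⟨by linarith, by linarith⟩
        ⟨by linarith, htπ⟩ hz2
    · rw [← Real.sin_pi_sub z]
      exact Real.strictMonoOn_sin.monotoneOn ⟨by linarith, by linarith⟩
        ⟨by linarith, htπ⟩ (by linarith)
  have hlow : ∀ z ∈ E \ E₀, Real.sin t ≤ Real.sin z := by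
    rintro z ⟨hzE, hzE₀⟩
    obtain ⟨hz0, hzπ⟩ := hEsub hzE
    rw [hE₀def, Set.mem_union] at hzE₀
    push_neg at hzE₀
    obtain ⟨h1, h2⟩ := hzE₀
    rw [Set.mem_Icc] at h1
    rw [Set.mem_Ioc] at h2
    have hzt : t < z := by
      by_contra h
      exact h1 ⟨hz0, by linarith⟩
    have hzt' : z ≤ π - t := by
      by_contra h
      exact h2 ⟨by linarith, hzπ⟩
    rcases le_or_gt z (π / 2) with hz | hz
    · exact Real.strictMonoOn_sin.monotoneOn ⟨by linarith, htπ⟩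
        ⟨by linarith, hz⟩ hzt.le
    · rw [← Real.sin_pi_sub z]
      exact Real.strictMonoOn_sin.monotoneOn ⟨by linarith, htπ⟩
        ⟨by linarith, by linarith⟩ (by linarith)
  -- equality of measures of the symmetric differences
  have hEE₀ne : volume (E ∩ E₀) ≠ ⊤ :=
    (lt_of_le_of_lt (measure_mono inter_subset_left) hEne.lt_top).ne
  have hIdiff : volume (E \ E₀) = volume (E₀ \ E) := by
    have h1 : volume (E \ E₀) = volume E - volume (E ∩ E₀) := by
      rw [← Set.diff_self_inter]
      exact measure_diff inter_subset_left
        (hEmeas.inter hE₀meas).nullMeasurableSet hEE₀ne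
    have h2 : volume (E₀ \ E) = volume E₀ - volume (E ∩ E₀) := by
      rw [show E₀ \ E = E₀ \ (E ∩ E₀) by rw [Set.inter_comm, Set.diff_self_inter]]
      exact measure_diff inter_subset_right
        (hEmeas.inter hE₀meas).nullMeasurableSet hEE₀ne
    rw [h1, h2, hEvol, hE₀vol]
  -- Step B : ∫⁻ over E₀ ≤ ∫⁻ over E
  have hB : ∫⁻ z in E₀, f z ≤ ∫⁻ z in E, f z := by
    have hlow' : ENNReal.ofReal (Real.sin t) * volume (E \ E₀) ≤ ∫⁻ z in E \ E₀, f z := by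
      rw [← setLIntegral_const]
      exact setLIntegral_mono hfmeas fun z hz =>
        ENNReal.ofReal_le_ofReal (hlow z hz)
    have hup' : ∫⁻ z in E₀ \ E, f z ≤ ENNReal.ofReal (Real.sin t) * volume (E₀ \ E) := by
      rw [← setLIntegral_const]
      exact setLIntegral_mono measurable_const fun z hz =>
        ENNReal.ofReal_le_ofReal (hup z hz.1)
    rw [← lintegral_inter_add_diff f E hE₀meas (μ := volume),
      ← lintegral_inter_add_diff f E₀ hEmeas (μ := volume), Set.inter_comm E₀ E]
    refine add_le_add le_rfl (hup'.trans ?_)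
    refine le_trans ?_ hlow'
    rw [hIdiff]
  -- the integral over E₀
  have hcost : Real.cos t ≤ 1 := Real.cos_le_one t
  have hcomp : ENNReal.ofReal (2 * (1 - Real.cos t)) = ∫⁻ z in E₀, f z := by
    have hint1 : ∫⁻ z in Icc 0 t, f z = ENNReal.ofReal (1 - Real.cos t) := by
      rw [hf, ← ofReal_integral_eq_lintegral_ofReal
        (Real.continuous_sin.integrableOn_Icc)
        (ae_restrict_of_forall_mem measurableSet_Icc
          fun z hz => Real.sin_nonneg_of_nonneg_of_le_pi hz.1 (by linarith [hz.2]))]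
      congr 1
      rw [MeasureTheory.integral_Icc_eq_integral_Ioc,
        ← intervalIntegral.integral_of_le ht0, integral_sin, Real.cos_zero]
    have hint2 : ∫⁻ z in Ioc (π - t) π, f z = ENNReal.ofReal (1 - Real.cos t) := by
      rw [hf, ← ofReal_integral_eq_lintegral_ofReal
        (Real.continuous_sin.integrableOn_Ioc)
        (ae_restrict_of_forall_mem measurableSet_Ioc
          fun z hz => Real.sin_nonneg_of_nonneg_of_le_pi (by linarith [hz.1]) hz.2)]
      congr 1
      rw [← intervalIntegral.integral_of_le (by linarith), integral_sin,
        Real.cos_pi_sub, Real.cos_pi]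
      ring
    rw [hE₀def, lintegral_union measurableSet_Ioc hdisj, hint1, hint2,
      ← ENNReal.ofReal_add (by linarith) (by linarith)]
    congr 1
    ring
  -- combine
  have hkey : ENNReal.ofReal (2 * (1 - Real.cos t)) ≤ volume S :=
    hcomp.le.trans (hB.trans hA)
  have hkey' : 2 * (1 - Real.cos t) ≤ (volume S).toReal := by
    have h := ENNReal.toReal_mono hSfin hkey
    rwa [ENNReal.toReal_ofReal (by linarith)] at h
  -- Step C : 2 m² / π² ≤ 2 (1 - cos t)
  have hC : 2 * m ^ 2 / π ^ 2 ≤ 2 * (1 - Real.cos t) := by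
    have hu := sin_lower_aux (u := t / 2) (by linarith) (by linarith)
    have hid : Real.cos t = 1 - 2 * Real.sin (t / 2) ^ 2 := by
      have hc := Real.cos_two_mul' (t / 2)
      rw [show 2 * (t / 2) = t by ring] at hc
      have := Real.sin_sq_add_cos_sq (t / 2)
      linarith
    have ha0 : 0 ≤ Real.sqrt 2 * (2 / π) * (t / 2) := by positivity
    have hsq : (Real.sqrt 2 * (2 / π) * (t / 2)) ^ 2 ≤ Real.sin (t / 2) ^ 2 :=
      pow_le_pow_left₀ ha0 hu 2
    have h2 : Real.sqrt 2 ^ 2 = 2 := Real.sq_sqrt (by norm_num)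
    have hval : (Real.sqrt 2 * (2 / π) * (t / 2)) ^ 2 = 2 * t ^ 2 / π ^ 2 := by
      have hexp : (Real.sqrt 2 * (2 / π) * (t / 2)) ^ 2
          = Real.sqrt 2 ^ 2 * ((2 / π) ^ 2 * (t / 2) ^ 2) := by ring
      rw [hexp, h2]
      field_simp
    have hπ2 : (0:ℝ) < π ^ 2 := by positivity
    have hs2 : 2 * t ^ 2 / π ^ 2 ≤ Real.sin (t / 2) ^ 2 := hval ▸ hsq
    rw [div_le_iff₀ hπ2] at hs2
    have hm2t : m = 2 * t := by rw [ht]; ring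
    rw [hid, hm2t, div_le_iff₀ hπ2]
    nlinarith [hs2]
  -- Step D : conclude
  have hD : 2 * m ^ 2 / π ^ 2 ≤ (volume S).toReal := hC.trans hkey'
  have hm2 : m ^ 2 ≤ π ^ 2 / 2 * (volume S).toReal := by
    have hπ2 : (0:ℝ) < π ^ 2 := by positivity
    rw [div_le_iff₀ hπ2] at hD
    nlinarith [hD]
  have hfinal : m ≤ π / Real.sqrt 2 * Real.sqrt (volume S).toReal := by
    have h2 : Real.sqrt 2 ^ 2 = 2 := Real.sq_sqrt (by norm_num)
    have hq : π ^ 2 / 2 * (volume S).toReal = (π / Real.sqrt 2) ^ 2 * (volume S).toReal := by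
      rw [div_pow, h2]
    have h := Real.sqrt_le_sqrt hm2
    rw [Real.sqrt_sq hm0, hq, Real.sqrt_mul (by positivity), Real.sqrt_sq (by positivity)] at h
    exact h
  calc volume (Icc 0 π ∩ (fun z => -Real.cos z) ⁻¹' S) = ENNReal.ofReal m := hEvol
    _ ≤ _ := ENNReal.ofReal_le_ofReal hfinal
end

section
/- Suppose a ≤ b are reals with b − a ≤ 2β for some β ≥ 0, and [a, b] ⊆ [−1, 1]. Let φ(z) = −cos z on [0, π]. Then |φ⁻¹([a, b])| ≤ (π/√2)·(2β)^{1/2} = π√β. -/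
open Real MeasureTheory Set

theorem stmt_14 (a b β : ℝ) (hab : a ≤ b) (hβ : 0 ≤ β) (hlen : b - a ≤ 2 * β)
    (hsub : Icc a b ⊆ Icc (-1) 1) :
    volume (Icc 0 π ∩ (fun z => -Real.cos z) ⁻¹' Icc a b) ≤
      ENNReal.ofReal (π * Real.sqrt β) := by
  have ha : a ∈ Icc (-1 : ℝ) 1 := hsub ⟨le_rfl, hab⟩
  have hb : b ∈ Icc (-1 : ℝ) 1 := hsub ⟨hab, le_rfl⟩
  set u := Real.arccos (-a) with hu
  set v := Real.arccos (-b) with hv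
  have hna : (-a) ∈ Icc (-1 : ℝ) 1 := ⟨by linarith [ha.2], by linarith [ha.1]⟩
  have hnb : (-b) ∈ Icc (-1 : ℝ) 1 := ⟨by linarith [hb.2], by linarith [hb.1]⟩
  have hcu : Real.cos u = -a := Real.cos_arccos hna.1 hna.2
  have hcv : Real.cos v = -b := Real.cos_arccos hnb.1 hnb.2
  have hu0 : 0 ≤ u := Real.arccos_nonneg _
  have hvπ : v ≤ π := Real.arccos_le_pi _
  have huv : u ≤ v :=
    (Real.strictAntiOn_arccos.antitoneOn hnb hna (by linarith))
  have hset : Icc 0 π ∩ (fun z => -Real.cos z) ⁻¹' Icc a b = Icc u v := by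
    ext z
    simp only [mem_inter_iff, mem_preimage, mem_Icc]
    constructor
    · rintro ⟨⟨hz0, hzπ⟩, h1, h2⟩
      have hcz : Real.cos z ∈ Icc (-1 : ℝ) 1 :=
        ⟨Real.neg_one_le_cos z, Real.cos_le_one z⟩
      have haz : Real.arccos (Real.cos z) = z := Real.arccos_cos hz0 hzπ
      constructor
      · have := Real.strictAntiOn_arccos.antitoneOn hcz hna (by linarith)
        rwa [haz] at this
      · have := Real.strictAntiOn_arccos.antitoneOn hnb hcz (by linarith)
        rwa [haz] at this
    · rintro ⟨h1, h2⟩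
      refine ⟨⟨le_trans hu0 h1, le_trans h2 hvπ⟩, ?_, ?_⟩
      · have : Real.cos z ≤ Real.cos u :=
          Real.cos_le_cos_of_nonneg_of_le_pi hu0 (le_trans h2 hvπ) h1
        rw [hcu] at this; linarith
      · have : Real.cos v ≤ Real.cos z :=
          Real.cos_le_cos_of_nonneg_of_le_pi (le_trans hu0 h1) hvπ h2
        rw [hcv] at this; linarith
  rw [hset, Real.volume_Icc]
  apply ENNReal.ofReal_le_ofReal
  -- now show v - u ≤ π * √β
  set d := v - u with hd
  set m := (u + v) / 2 with hm
  have hd0 : 0 ≤ d := by simp [hd]; linarith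
  have hdπ : d ≤ π := by simp [hd]; linarith
  have hπ : (0:ℝ) < π := Real.pi_pos
  have hkey : b - a = 2 * Real.sin m * Real.sin (d / 2) := by
    have h := Real.cos_sub_cos u v
    rw [hcu, hcv] at h
    have h2 : (u - v) / 2 = -(d / 2) := by rw [hd]; ring
    rw [h2, Real.sin_neg] at h
    have h3 : (u + v) / 2 = m := hm.symm
    rw [h3] at h
    linarith [h]
  have hsdnn : 0 ≤ Real.sin (d / 2) := Real.sin_nonneg_of_nonneg_of_le_pi
    (by linarith) (by linarith)
  have hsin1 : Real.sin (d / 2) ≤ Real.sin m := by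
    rcases le_or_gt m (π / 2) with hcase | hcase
    · exact Real.sin_le_sin_of_le_of_le_pi_div_two (by linarith) hcase
        (by rw [hm, hd]; linarith)
    · have hmm : Real.sin m = Real.sin (π - m) := (Real.sin_pi_sub m).symm
      rw [hmm]
      exact Real.sin_le_sin_of_le_of_le_pi_div_two (by linarith) (by linarith)
        (by rw [hm, hd]; linarith)
  have hsin2 : d / π ≤ Real.sin (d / 2) := by
    have := Real.mul_le_sin (x := d / 2) (by linarith) (by linarith)
    calc d / π = 2 / π * (d / 2) := by field_simp
    _ ≤ Real.sin (d / 2) := this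
  set s := Real.sqrt β with hs
  have hs0 : 0 ≤ s := Real.sqrt_nonneg _
  have hs2 : s ^ 2 = β := Real.sq_sqrt hβ
  have hdivnn : 0 ≤ d / π := div_nonneg hd0 hπ.le
  have hsq : (d / π) ^ 2 ≤ s ^ 2 := by
    have h1 : (d / π) ^ 2 ≤ Real.sin m * Real.sin (d / 2) := by
      have := mul_le_mul hsin1 hsin2 hdivnn (le_trans hsdnn hsin1)
      nlinarith
    rw [hs2]
    linarith
  have hds : d / π ≤ s := by
    rw [hs]
    exact Real.le_sqrt_of_sq_le (hs2 ▸ hsq)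
  rw [div_le_iff₀ hπ] at hds
  linarith
end

section
/- For z⁻, z⁺ ∈ [0, π] with z⁻ ≤ z⁺, define λ^± = −cos z^±. Then (z⁺ − z⁻)² ≤ (π²/2)·(λ⁺ − λ⁻). -/
theorem stmt_15 (zm zp : ℝ) (h0 : zm ∈ Set.Icc 0 Real.pi) (h1 : zp ∈ Set.Icc 0 Real.pi)
    (h2 : zm ≤ zp) :
    (zp - zm) ^ 2 ≤ Real.pi ^ 2 / 2 * (-Real.cos zp - -Real.cos zm) := by
  obtain ⟨hm0, hmp⟩ := h0
  obtain ⟨hp0, hpp⟩ := h1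
  set a := (zp - zm) / 2 with ha
  set b := (zp + zm) / 2 with hb
  have hpi := Real.pi_pos
  have ha0 : 0 ≤ a := by simp [ha]; linarith
  have hab : a ≤ b := by simp [ha, hb]; linarith
  have hbpa : b ≤ Real.pi - a := by simp [ha, hb]; linarith
  have ha2 : a ≤ Real.pi / 2 := by linarith
  -- sin a ≥ 2a/π
  have hsa : 2 / Real.pi * a ≤ Real.sin a := Real.mul_le_sin ha0 ha2
  -- sin b ≥ sin a
  have hsb : Real.sin a ≤ Real.sin b := by
    rcases le_or_gt b (Real.pi / 2) with h | h
    · exact Real.sin_le_sin_of_le_of_le_pi_div_two (by linarith) h hab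
    · rw [← Real.sin_pi_sub b]
      exact Real.sin_le_sin_of_le_of_le_pi_div_two (by linarith) (by linarith) (by linarith)
  have hcos : -Real.cos zp - -Real.cos zm = 2 * Real.sin b * Real.sin a := by
    have := Real.cos_sub_cos zm zp
    have h1 : (zm - zp) / 2 = -a := by ring
    have h2 : (zm + zp) / 2 = b := by ring
    rw [h1, h2, Real.sin_neg] at this
    linarith
  rw [hcos]
  have key : (2 / Real.pi * a) ^ 2 ≤ Real.sin b * Real.sin a := by
    have h2a : 0 ≤ 2 / Real.pi * a := by positivity
    calc (2 / Real.pi * a) ^ 2 = (2 / Real.pi * a) * (2 / Real.pi * a) := sq _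
    _ ≤ Real.sin b * Real.sin a := by
        apply mul_le_mul (le_trans hsa hsb) hsa h2a (Real.sin_nonneg_of_nonneg_of_le_pi (by linarith) (by linarith))
  have hzz : zp - zm = 2 * a := by ring
  rw [hzz]
  have hpin : Real.pi ≠ 0 := ne_of_gt hpi
  calc (2 * a) ^ 2 = Real.pi ^ 2 / 2 * (2 * (2 / Real.pi * a) ^ 2) := by
        field_simp
  _ ≤ Real.pi ^ 2 / 2 * (2 * Real.sin b * Real.sin a) := by
        have : 2 * (2 / Real.pi * a) ^ 2 ≤ 2 * Real.sin b * Real.sin a := by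
          rw [mul_assoc]; linarith
        nlinarith [sq_nonneg Real.pi]
end

section
/- Let λ⁻ ≤ λ⁺ with [λ⁻, λ⁺] ⊆ [−1, 1], let z^± = arccos(−λ^±) ∈ [0, π], and let z* = arccos(1 − (λ⁺ − λ⁻)/2) ∈ [0, π/2]. Then z⁺ − z⁻ ≤ 2z* and 4z*² ≤ (π²/2)(λ⁺ − λ⁻); consequently z⁺ − z⁻ ≤ (π/√2)(λ⁺ − λ⁻)^{1/2}. -/
open Real

-- chord bound: sin x ≥ (2√2/π) x on [0, π/4]
lemma chord_sin {x : ℝ} (hx : 0 ≤ x) (hx' : x ≤ π / 4) :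
    Real.sqrt 2 / 2 * (4 * x / π) ≤ Real.sin x := by
  have hπ : (0:ℝ) < π := Real.pi_pos
  set b : ℝ := 4 * x / π with hb
  have hb0 : 0 ≤ b := by positivity
  have hb1 : b ≤ 1 := by
    rw [hb, div_le_one hπ]; linarith
  have key := strictConcaveOn_sin_Icc.concaveOn.2
    (Set.mem_Icc.2 ⟨le_rfl, hπ.le⟩)
    (Set.mem_Icc.2 ⟨by positivity, by linarith⟩ : (π/4 : ℝ) ∈ Set.Icc 0 π)
    (sub_nonneg.2 hb1) hb0 (by ring)
  have hx_eq : (1 - b) • (0:ℝ) + b • (π/4) = x := by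
    rw [hb]; simp only [smul_eq_mul, mul_zero, zero_add]; field_simp
  rw [hx_eq] at key
  simp only [smul_eq_mul, Real.sin_zero, Real.sin_pi_div_four] at key
  linarith

set_option maxHeartbeats 1000000 in
theorem stmt_19 (lm lp : ℝ) (h1 : -1 ≤ lm) (h2 : lm ≤ lp) (h3 : lp ≤ 1) :
    Real.arccos (-lp) - Real.arccos (-lm) ≤ 2 * Real.arccos (1 - (lp - lm) / 2) ∧
    4 * Real.arccos (1 - (lp - lm) / 2) ^ 2 ≤ Real.pi ^ 2 / 2 * (lp - lm) ∧
    Real.arccos (-lp) - Real.arccos (-lm) ≤ Real.pi / Real.sqrt 2 * Real.sqrt (lp - lm) := by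
  have hπ : (0:ℝ) < π := Real.pi_pos
  have hd0 : 0 ≤ lp - lm := by linarith
  have hd2 : lp - lm ≤ 2 := by linarith
  set a := Real.arccos (-lm) with ha_def
  set b := Real.arccos (-lp) with hb_def
  set c := Real.arccos (1 - (lp - lm) / 2) with hc_def
  have hca : Real.cos a = -lm := Real.cos_arccos (by linarith) (by linarith)
  have hcb : Real.cos b = -lp := Real.cos_arccos (by linarith) (by linarith)
  have hcc : Real.cos c = 1 - (lp - lm) / 2 := Real.cos_arccos (by linarith) (by linarith)
  have ha0 : 0 ≤ a := Real.arccos_nonneg _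
  have hb0 : 0 ≤ b := Real.arccos_nonneg _
  have hc0 : 0 ≤ c := Real.arccos_nonneg _
  have haπ : a ≤ π := Real.arccos_le_pi _
  have hbπ : b ≤ π := Real.arccos_le_pi _
  have hc2 : c ≤ π / 2 := Real.arccos_le_pi_div_two.2 (by linarith)
  -- Part 1
  have part1 : b - a ≤ 2 * c := by
    rcases le_or_gt b a with h | h
    · linarith
    · have hP0 : 0 ≤ (1 - lm ^ 2) * (1 - lp ^ 2) :=
        mul_nonneg (by nlinarith) (by nlinarith)
      have hsa : Real.sin a = Real.sqrt (1 - lm ^ 2) := by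
        rw [ha_def, Real.sin_arccos]; ring_nf
      have hsb : Real.sin b = Real.sqrt (1 - lp ^ 2) := by
        rw [hb_def, Real.sin_arccos]; ring_nf
      have hcos_sub : Real.cos (b - a) = lm * lp + Real.sqrt ((1 - lm ^ 2) * (1 - lp ^ 2)) := by
        rw [Real.cos_sub, hca, hcb, hsa, hsb, ← Real.sqrt_mul (by nlinarith)]
        ring
      have hcos2c : Real.cos (2 * c) = 2 * (1 - (lp - lm) / 2) ^ 2 - 1 := by
        rw [Real.cos_two_mul, hcc]
      have key : Real.cos (2 * c) ≤ Real.cos (b - a) := by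
        rw [hcos_sub, hcos2c]
        have hR : 2 * (1 - (lp - lm) / 2) ^ 2 - 1 - lm * lp ≤
            Real.sqrt ((1 - lm ^ 2) * (1 - lp ^ 2)) := by
          rcases le_or_gt (2 * (1 - (lp - lm) / 2) ^ 2 - 1 - lm * lp) 0 with hR0 | hR0
          · exact hR0.trans (Real.sqrt_nonneg _)
          · rw [Real.le_sqrt hR0.le hP0]
            have hA : 0 ≤ (lp - lm) * (2 * (1 - (lp - lm) / 2) ^ 2 - 1 - lm * lp) :=
              mul_nonneg hd0 hR0.le
            have hB : 0 ≤ (lp - lm) ^ 2 * (lm + (lp - lm) / 2) ^ 2 :=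
              mul_nonneg (sq_nonneg _) (sq_nonneg _)
            have hC : 0 ≤ (lp - lm) ^ 2 * (2 - (lp - lm) ^ 2 / 2) :=
              mul_nonneg (sq_nonneg _) (by nlinarith [mul_nonneg hd0 hd0, hd0, hd2])
            have hid : (1 - lm ^ 2) * (1 - lp ^ 2) -
                (2 * (1 - (lp - lm) / 2) ^ 2 - 1 - lm * lp) ^ 2 =
                4 * ((lp - lm) * (2 * (1 - (lp - lm) / 2) ^ 2 - 1 - lm * lp)) +
                (lp - lm) ^ 2 * (lm + (lp - lm) / 2) ^ 2 +
                (lp - lm) ^ 2 * (2 - (lp - lm) ^ 2 / 2) := by ring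
            linarith [hA, hB, hC, hid]
        linarith
      by_contra hcon
      push_neg at hcon
      have := Real.cos_lt_cos_of_nonneg_of_le_pi (by linarith : (0:ℝ) ≤ 2 * c)
        (by linarith : b - a ≤ π) hcon
      linarith
  -- Part 2
  have hsinhalf : Real.sin (c / 2) ^ 2 = (lp - lm) / 4 := by
    have := Real.sin_sq_eq_half_sub (c / 2)
    rw [show 2 * (c / 2) = c by ring, hcc] at this
    rw [this]; ring
  have hs2 : Real.sqrt 2 ^ 2 = 2 := Real.sq_sqrt (by norm_num)
  have hs0 : (0:ℝ) < Real.sqrt 2 := Real.sqrt_pos.2 (by norm_num)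
  have part2 : 4 * c ^ 2 ≤ π ^ 2 / 2 * (lp - lm) := by
    have hch := chord_sin (by linarith : (0:ℝ) ≤ c / 2) (by linarith : c / 2 ≤ π / 4)
    have hlhs : 0 ≤ Real.sqrt 2 / 2 * (4 * (c / 2) / π) := by positivity
    have hsq : (Real.sqrt 2 / 2 * (4 * (c / 2) / π)) ^ 2 ≤ Real.sin (c / 2) ^ 2 :=
      pow_le_pow_left₀ hlhs hch 2
    rw [hsinhalf] at hsq
    have hexp : (Real.sqrt 2 / 2 * (4 * (c / 2) / π)) ^ 2 = 2 * c ^ 2 / π ^ 2 := by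
      rw [mul_pow, div_pow, div_pow, hs2]
      ring
    rw [hexp, div_le_iff₀ (by positivity : (0:ℝ) < π ^ 2)] at hsq
    nlinarith
  refine ⟨part1, part2, ?_⟩
  -- Part 3
  have hδ : Real.sqrt (lp - lm) ^ 2 = lp - lm := Real.sq_sqrt hd0
  have hT0 : 0 ≤ π / Real.sqrt 2 * Real.sqrt (lp - lm) := by positivity
  have hT2 : (π / Real.sqrt 2 * Real.sqrt (lp - lm)) ^ 2 = π ^ 2 / 2 * (lp - lm) := by
    rw [mul_pow, div_pow, hs2, hδ]
  rcases le_or_gt (b - a) 0 with h | h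
  · linarith
  · have hsq : (b - a) ^ 2 ≤ (π / Real.sqrt 2 * Real.sqrt (lp - lm)) ^ 2 := by
      rw [hT2]; nlinarith
    nlinarith
end
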